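/- Let n, m, N, L ∈ ℕ, P ∈ ℝ^{m×N}, Q ∈ ℝ^{N×n}, and for l = 0,…,L−1 let r_l ∈ ℕ and f^(l) : ℝ^N × ℝ^{r_l} → ℝ^N be continuously differentiable. Let I be a finite nonempty index set, ξ^(k) ∈ ℝ^n and F(ξ^(k)) ∈ ℝ^m for k ∈ I. For design parameters ω^(l) ∈ ℝ^{r_l}, define for each k ∈ I the sequence x^(0,k) = Qξ^(k), x^(l+1,k) = x^(l,k) + f^(l)(x^(l,k), ω^(l)) for l = 0,…,L−1, and the loss e(ω) = (1/(2|I|)) Σ_{k∈I} |P x^(L,k) − F(ξ^(k))|². Define λ^(L,k) = (1/|I|) P^⊤(P x^(L,k) − F(ξ^(k))) and, backwards for l = L−1,…,0, λ^(l,k) = λ^(l+1,k) + ∇_x f^(l)⊤(x^(l,k), ω^(l)) λ^(l+1,k). Then for each l = 0,…,L−1, the gradient of e with respect to ω^(l) is ∇_{ω^(l)} e(ω) = Σ_{k∈I} ∇_ω f^(l)⊤(x^(l,k), ω^(l)) λ^(l+1,k). -/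

import Mathlib

/-- The ResNet forward recursion x⁽⁰⁾ = Qξ, x⁽ˡ⁺¹⁾ = x⁽ˡ⁾ + f⁽ˡ⁾(x⁽ˡ⁾, ω⁽ˡ⁾). -/
noncomputable def resX {N n L : ℕ} {r : Fin L → ℕ}
    (f : ∀ l : Fin L, (Fin N → ℝ) → (Fin (r l) → ℝ) → (Fin N → ℝ))
    (Q : Matrix (Fin N) (Fin n) ℝ) (ω : ∀ l : Fin L, Fin (r l) → ℝ)
    (ξ : Fin n → ℝ) : ℕ → Fin N → ℝ
  | 0 => Q.mulVec ξ
  | l + 1 =>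
    if h : l < L then
      resX f Q ω ξ l + f ⟨l, h⟩ (resX f Q ω ξ l) (ω ⟨l, h⟩)
    else resX f Q ω ξ l

/-- error backpropagation for a general ResNet: the gradient of the loss
with respect to each design parameter ω⁽ˡ⁾ is Σ_k (∇_ω f⁽ˡ⁾)ᵀ(x⁽ˡ'ᵏ⁾, ω⁽ˡ⁾) λ⁽ˡ⁺¹'ᵏ⁾. -/
theorem stmt_12 (n m N L K : ℕ) (hK : 0 < K) (r : Fin L → ℕ)
    (P : Matrix (Fin m) (Fin N) ℝ) (Q : Matrix (Fin N) (Fin n) ℝ)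
    (f : ∀ l : Fin L, (Fin N → ℝ) → (Fin (r l) → ℝ) → (Fin N → ℝ))
    (hf : ∀ l, ContDiff ℝ 1 fun p : (Fin N → ℝ) × (Fin (r l) → ℝ) => f l p.1 p.2)
    (ξ : Fin K → Fin n → ℝ) (Fv : Fin K → Fin m → ℝ)
    (ω : ∀ l : Fin L, Fin (r l) → ℝ)
    (lam : Fin K → ℕ → Fin N → ℝ)
    (hlamL : ∀ k, lam k L =
      (1 / (K : ℝ)) • (Matrix.transpose P).mulVec
        (P.mulVec (resX f Q ω (ξ k) L) - Fv k))
    (hlam : ∀ k, ∀ l : Fin L, ∀ j,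
      lam k l j = lam k (l + 1) j +
        ∑ i, fderiv ℝ (fun z => f l z (ω l) i) (resX f Q ω (ξ k) l) (Pi.single j 1) *
          lam k (l + 1) i) :
    ∀ l : Fin L,
      DifferentiableAt ℝ
        (fun w : Fin (r l) → ℝ => (1 / (2 * (K : ℝ))) * ∑ k, ∑ i,
          (P.mulVec (resX f Q (Function.update ω l w) (ξ k) L) i - Fv k i) ^ 2)
        (ω l) ∧
      ∀ j : Fin (r l),
        fderiv ℝ
          (fun w : Fin (r l) → ℝ => (1 / (2 * (K : ℝ))) * ∑ k, ∑ i,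
            (P.mulVec (resX f Q (Function.update ω l w) (ξ k) L) i - Fv k i) ^ 2)
          (ω l) (Pi.single j 1) =
        ∑ k, ∑ i,
          fderiv ℝ (fun w => f l (resX f Q ω (ξ k) l) w i) (ω l) (Pi.single j 1) *
            lam k (l + 1) i := by
  intro l
  have hK0 : (K : ℝ) ≠ 0 := Nat.cast_ne_zero.mpr hK.ne'
  -- a continuous linear functional on ℝᴹ is determined by its values on the basis
  have clm_sum : ∀ {M : ℕ} (φ : (Fin M → ℝ) →L[ℝ] ℝ) (u : Fin M → ℝ),
      φ u = ∑ j, u j * φ (Pi.single j 1) := by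
    intro M φ u
    have h : u = ∑ j, u j • (Pi.single j 1 : Fin M → ℝ) := by
      funext x; simp [Pi.single_apply, Finset.sum_ite_eq', mul_comm]
    conv_lhs => rw [h]
    simp [map_sum, map_smul, smul_eq_mul]
  -- updating ω at l does not change layers up to l
  have hupd : ∀ (w : Fin (r l) → ℝ) (k : Fin K) (t : ℕ), t ≤ l.1 →
      resX f Q (Function.update ω l w) (ξ k) t = resX f Q ω (ξ k) t := by
    intro w k t
    induction t with
    | zero => intro _; rfl
    | succ s ih =>
      intro ht
      have hs : s ≤ l.1 := Nat.le_of_succ_le ht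
      have hsl : s < l.1 := Nat.lt_of_succ_le ht
      have hsL : s < L := hsl.trans l.isLt
      have hne : (⟨s, hsL⟩ : Fin L) ≠ l := by
        simp only [ne_eq, Fin.ext_iff]; omega
      rw [resX, resX, dif_pos hsL, dif_pos hsL, ih hs, Function.update_of_ne hne]
  -- the key forward-mode differentiation claim with the adjoint identity
  have key : ∀ (k : Fin K) (t : ℕ), l.1 + 1 ≤ t → t ≤ L →
      ∃ D : (Fin (r l) → ℝ) →L[ℝ] (Fin N → ℝ),
        HasFDerivAt (fun w => resX f Q (Function.update ω l w) (ξ k) t) D (ω l) ∧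
        ∀ v, ∑ i, lam k t i * D v i =
          ∑ i, fderiv ℝ (fun w => f l (resX f Q ω (ξ k) l) w i) (ω l) v *
            lam k (l.1 + 1) i := by
    intro k t h1
    induction t, h1 using Nat.le_induction with
    | base =>
      intro _
      have hdiff : DifferentiableAt ℝ (fun w => f l (resX f Q ω (ξ k) l) w) (ω l) :=
        (((hf l).differentiable one_ne_zero) (resX f Q ω (ξ k) l, ω l)).comp (ω l)
          ((differentiableAt_const _).prodMk differentiableAt_id)
      have hd : HasFDerivAt (fun w => f l (resX f Q ω (ξ k) l) w)
          (fderiv ℝ (fun w => f l (resX f Q ω (ξ k) l) w) (ω l)) (ω l) := hdiff.hasFDerivAt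
      have hfun : (fun w => resX f Q (Function.update ω l w) (ξ k) (l.1 + 1)) =
          fun w => resX f Q ω (ξ k) l + f l (resX f Q ω (ξ k) l) w := by
        funext w
        rw [resX, dif_pos l.isLt, hupd w k l.1 le_rfl]
        simp [Function.update_self]
      refine ⟨fderiv ℝ (fun w => f l (resX f Q ω (ξ k) l) w) (ω l),
        by rw [hfun]; exact hd.const_add _, ?_⟩
      intro v
      have hc : ∀ i, fderiv ℝ (fun w => f l (resX f Q ω (ξ k) l) w i) (ω l) v =
          fderiv ℝ (fun w => f l (resX f Q ω (ξ k) l) w) (ω l) v i := by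
        intro i
        have h2 : HasFDerivAt (fun w => f l (resX f Q ω (ξ k) l) w i)
            ((ContinuousLinearMap.proj i).comp
              (fderiv ℝ (fun w => f l (resX f Q ω (ξ k) l) w) (ω l))) (ω l) :=
          hasFDerivAt_pi'.1 hd i
        rw [h2.fderiv]; rfl
      simp only [hc]
      exact Finset.sum_congr rfl fun i _ => mul_comm _ _
    | succ t ht ih =>
      intro htL1
      have htL : t < L := htL1
      obtain ⟨D, hD, hsum⟩ := ih htL.le
      have hgdiff : DifferentiableAt ℝ (fun z => f ⟨t, htL⟩ z (ω ⟨t, htL⟩))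
          (resX f Q ω (ξ k) t) :=
        by have h1 : DifferentiableAt ℝ (fun z : Fin N → ℝ => (z, ω ⟨t, htL⟩))
               (resX f Q ω (ξ k) t) := differentiableAt_id.prodMk (differentiableAt_const _)
           exact (((hf ⟨t, htL⟩).differentiable one_ne_zero) _).comp _ h1
      set J := fderiv ℝ (fun z => f ⟨t, htL⟩ z (ω ⟨t, htL⟩)) (resX f Q ω (ξ k) t) with hJdef
      have hgd : HasFDerivAt (fun z => f ⟨t, htL⟩ z (ω ⟨t, htL⟩)) J
          (resX f Q ω (ξ k) t) := hgdiff.hasFDerivAt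
      have hXt : resX f Q (Function.update ω l (ω l)) (ξ k) t = resX f Q ω (ξ k) t := by
        rw [Function.update_eq_self]
      have hgd' : HasFDerivAt (fun z => f ⟨t, htL⟩ z (ω ⟨t, htL⟩)) J
          (resX f Q (Function.update ω l (ω l)) (ξ k) t) := by rw [hXt]; exact hgd
      have hcompD : HasFDerivAt
          (fun w => f ⟨t, htL⟩ (resX f Q (Function.update ω l w) (ξ k) t) (ω ⟨t, htL⟩))
          (J.comp D) (ω l) := by have h := HasFDerivAt.comp (ω l) hgd' hD; exact h
      have hne : (⟨t, htL⟩ : Fin L) ≠ l := by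
        simp only [ne_eq, Fin.ext_iff]; omega
      have hfun : (fun w => resX f Q (Function.update ω l w) (ξ k) (t + 1)) =
          fun w => resX f Q (Function.update ω l w) (ξ k) t +
            f ⟨t, htL⟩ (resX f Q (Function.update ω l w) (ξ k) t) (ω ⟨t, htL⟩) := by
        funext w
        rw [resX, dif_pos htL, Function.update_of_ne hne]
      refine ⟨D + J.comp D, by rw [hfun]; exact hD.add hcompD, ?_⟩
      intro v
      have hlamt : ∀ j, lam k t j = lam k (t + 1) j +
          ∑ i, fderiv ℝ (fun z => f ⟨t, htL⟩ z (ω ⟨t, htL⟩) i) (resX f Q ω (ξ k) t)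
            (Pi.single j 1) * lam k (t + 1) i := fun j => hlam k ⟨t, htL⟩ j
      have hJc : ∀ i (u : Fin N → ℝ),
          fderiv ℝ (fun z => f ⟨t, htL⟩ z (ω ⟨t, htL⟩) i) (resX f Q ω (ξ k) t) u = J u i := by
        intro i u
        have h2 : HasFDerivAt (fun z => f ⟨t, htL⟩ z (ω ⟨t, htL⟩) i)
            ((ContinuousLinearMap.proj i).comp J) (resX f Q ω (ξ k) t) :=
          hasFDerivAt_pi'.1 hgd i
        rw [h2.fderiv]; rfl
      have hJexp : ∀ (u : Fin N → ℝ) i, J u i = ∑ j, u j * J (Pi.single j 1) i := by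
        intro u i
        simpa using clm_sum ((ContinuousLinearMap.proj i).comp J) u
      rw [← hsum v]
      have hDv : ∀ i, (D + J.comp D) v i = D v i + J (D v) i := fun i => rfl
      calc ∑ i, lam k (t + 1) i * (D + J.comp D) v i
          = ∑ i, lam k (t + 1) i * D v i + ∑ i, lam k (t + 1) i * J (D v) i := by
            simp only [hDv, mul_add, Finset.sum_add_distrib]
        _ = ∑ i, lam k (t + 1) i * D v i +
            ∑ i, lam k (t + 1) i * ∑ jj, D v jj * J (Pi.single jj 1) i := by
            congr 1
            exact Finset.sum_congr rfl fun i _ => by rw [hJexp (D v) i]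
        _ = ∑ i, lam k t i * D v i := by
            simp only [hlamt, hJc, Finset.mul_sum, Finset.sum_mul, add_mul,
              Finset.sum_add_distrib]
            congr 1
            rw [Finset.sum_comm]
            exact Finset.sum_congr rfl fun i _ => Finset.sum_congr rfl fun j _ => by ring
  -- now assemble the loss derivative
  have hlL : l.1 + 1 ≤ L := l.isLt
  choose D hD hsum using fun k => key k L hlL le_rfl
  have hXj : ∀ (k : Fin K) (j : Fin N),
      HasFDerivAt (fun w => resX f Q (Function.update ω l w) (ξ k) L j)
        ((ContinuousLinearMap.proj j).comp (D k)) (ω l) :=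
    fun k j => hasFDerivAt_pi'.1 (hD k) j
  have hA : ∀ k (i : Fin m),
      HasFDerivAt (fun w => P.mulVec (resX f Q (Function.update ω l w) (ξ k) L) i - Fv k i)
        (∑ j, P i j • ((ContinuousLinearMap.proj j).comp (D k))) (ω l) := by
    intro k i
    have h1 : HasFDerivAt
        (fun w => (∑ j, P i j * resX f Q (Function.update ω l w) (ξ k) L j) - Fv k i)
        (∑ j, P i j • ((ContinuousLinearMap.proj j).comp (D k))) (ω l) :=
      (HasFDerivAt.fun_sum fun j _ => (hXj k j).const_mul (P i j)).sub_const _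
    have h2 : (fun w => P.mulVec (resX f Q (Function.update ω l w) (ξ k) L) i - Fv k i) =
        fun w => (∑ j, P i j * resX f Q (Function.update ω l w) (ξ k) L j) - Fv k i := by
      funext w; simp [Matrix.mulVec, dotProduct]
    rw [h2]; exact h1
  have hA' : ∀ k (i : Fin m),
      HasFDerivAt
        (fun w => (P.mulVec (resX f Q (Function.update ω l w) (ξ k) L) i - Fv k i) ^ 2)
        (((2 : ℝ) * (P.mulVec (resX f Q ω (ξ k) L) i - Fv k i)) •
          ∑ j, P i j • ((ContinuousLinearMap.proj j).comp (D k))) (ω l) := by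
    intro k i
    have h := (hA k i).fun_mul (hA k i)
    have e : (((2 : ℝ) * (P.mulVec (resX f Q ω (ξ k) L) i - Fv k i)) •
          ∑ j, P i j • ((ContinuousLinearMap.proj j).comp (D k))) =
        ((P.mulVec (resX f Q ω (ξ k) L) i - Fv k i) •
          ∑ j, P i j • ((ContinuousLinearMap.proj j).comp (D k))) +
        ((P.mulVec (resX f Q ω (ξ k) L) i - Fv k i) •
          ∑ j, P i j • ((ContinuousLinearMap.proj j).comp (D k))) := by
      rw [two_mul, add_smul]
    rw [e]
    simpa only [pow_two, Function.update_eq_self] using h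
  have hE : HasFDerivAt
      (fun w : Fin (r l) → ℝ => (1 / (2 * (K : ℝ))) * ∑ k, ∑ i,
        (P.mulVec (resX f Q (Function.update ω l w) (ξ k) L) i - Fv k i) ^ 2)
      ((1 / (2 * (K : ℝ))) • ∑ k, ∑ i,
        ((2 : ℝ) * (P.mulVec (resX f Q ω (ξ k) L) i - Fv k i)) •
          ∑ j, P i j • ((ContinuousLinearMap.proj j).comp (D k))) (ω l) :=
    (HasFDerivAt.fun_sum fun k _ => HasFDerivAt.fun_sum fun i _ => hA' k i).const_mul _
  refine ⟨hE.differentiableAt, fun j => ?_⟩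
  rw [hE.fderiv]
  simp only [ContinuousLinearMap.smul_apply, ContinuousLinearMap.coe_sum',
    Finset.sum_apply, ContinuousLinearMap.coe_smul', Pi.smul_apply,
    ContinuousLinearMap.coe_comp', Function.comp_apply, ContinuousLinearMap.proj_apply,
    smul_eq_mul]
  rw [Finset.mul_sum]
  refine Finset.sum_congr rfl fun k _ => ?_
  rw [← hsum k (Pi.single j 1)]
  have hRHS : ∀ i' : Fin N, lam k L i' =
      (1 / (K : ℝ)) * ∑ i, P i i' * (P.mulVec (resX f Q ω (ξ k) L) i - Fv k i) := by
    intro i'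
    rw [hlamL k]
    simp [Matrix.mulVec, dotProduct, Matrix.transpose_apply]
  simp only [hRHS]
  simp only [Finset.mul_sum, Finset.sum_mul]
  rw [Finset.sum_comm]
  refine Finset.sum_congr rfl fun i _ => Finset.sum_congr rfl fun i' _ => ?_
  field_simp
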